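/- For each x let V_x : S → ℝ satisfy 𝒯_x V_x = V_x, define Q_x(s,a) = r x s a + γ · ∑_{s'} P x s a s' · V_x(s'), and define the optimal soft policy π_x(s,a) = exp(Q_x(s,a)/τ) / ∑_{a'} exp(Q_x(s,a')/τ). Suppose C_Q ≥ 0 is such that ( ∑_{s,a} (Q_{x₁}(s,a) − Q_{x₂}(s,a))² )^{1/2} ≤ C_Q · ‖x₁ − x₂‖ for all x₁, x₂. Then ( ∑_{s,a} (π_{x₁}(s,a) − π_{x₂}(s,a))² )^{1/2} ≤ (C_Q / (2τ)) · ‖x₁ − x₂‖ for all x₁, x₂. -/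

import Mathlib

open scoped BigOperators

noncomputable section
open Finset

lemma var_le {A : Type*} [Fintype A] [Nonempty A] (p v : A → ℝ)
    (hp : ∀ a, 0 ≤ p a) (hp1 : ∑ a, p a = 1) :
    ∑ a, p a * (v a - ∑ b, p b * v b) ^ 2 ≤ (1/2) * ∑ a, v a ^ 2 := by
  classical
  obtain ⟨aM, -, hM⟩ := Finset.exists_max_image Finset.univ v ⟨Classical.arbitrary A, Finset.mem_univ _⟩
  obtain ⟨am, -, hm⟩ := Finset.exists_min_image Finset.univ v ⟨Classical.arbitrary A, Finset.mem_univ _⟩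
  set μ := ∑ b, p b * v b with hμ
  set c : ℝ := (v aM + v am)/2 with hc
  have h0 : ∑ a, p a * (v a - μ) = 0 := by
    simp only [mul_sub, Finset.sum_sub_distrib, ← Finset.sum_mul, hp1]; ring
  have key : ∑ a, p a * (v a - c)^2 = (∑ a, p a*(v a - μ)^2) + (μ - c)^2 := by
    have h2 : ∀ a, p a*(v a - c)^2 = p a*(v a - μ)^2 + p a*((μ - c)^2) + (p a*(v a - μ))*(2*(μ-c)) := by
      intro a; ring
    rw [Finset.sum_congr rfl (fun a _ => h2 a), Finset.sum_add_distrib,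
        Finset.sum_add_distrib, ← Finset.sum_mul, ← Finset.sum_mul, hp1, h0]
    ring
  have step1 : ∑ a, p a * (v a - μ)^2 ≤ ∑ a, p a * (v a - c)^2 := by
    rw [key]; nlinarith [sq_nonneg (μ - c)]
  have step2 : ∑ a, p a * (v a - c)^2 ≤ ((v aM - v am)/2)^2 := by
    calc ∑ a, p a * (v a - c)^2 ≤ ∑ a, p a * ((v aM - v am)/2)^2 := by
          apply Finset.sum_le_sum
          intro a _
          apply mul_le_mul_of_nonneg_left _ (hp a)
          have h1 := hM a (Finset.mem_univ a)
          have h2 := hm a (Finset.mem_univ a)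
          have habs : |v a - c| ≤ (v aM - v am)/2 := by
            rw [abs_le]; constructor <;> (rw [hc]; linarith)
          calc (v a - c)^2 = |v a - c|^2 := (sq_abs _).symm
            _ ≤ ((v aM - v am)/2)^2 := by
                apply pow_le_pow_left₀ (abs_nonneg _) habs
      _ = ((v aM - v am)/2)^2 := by rw [← Finset.sum_mul, hp1, one_mul]
  have step3 : ((v aM - v am)/2)^2 ≤ (1/2) * ∑ a, v a ^ 2 := by
    by_cases h : aM = am
    · subst h
      have hnn : (0:ℝ) ≤ ∑ a, v a ^ 2 := Finset.sum_nonneg fun a _ => sq_nonneg _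
      simp only [sub_self]
      nlinarith
    · have hsub : ({aM, am} : Finset A) ⊆ Finset.univ := Finset.subset_univ _
      have hpair : v aM ^2 + v am ^2 ≤ ∑ a, v a ^ 2 := by
        have h3 := Finset.sum_le_sum_of_subset_of_nonneg hsub
          (fun a _ _ => sq_nonneg (v a))
        rwa [Finset.sum_pair h] at h3
      nlinarith [sq_nonneg (v aM + v am)]
  linarith

lemma cov_le {A : Type*} [Fintype A] [Nonempty A] (p e u : A → ℝ)
    (hp : ∀ a, 0 ≤ p a) (hp1 : ∑ a, p a = 1) :
    ∑ a, p a * e a * u a - (∑ a, p a * e a) * (∑ a, p a * u a) ≤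
      (1/2) * (Real.sqrt (∑ a, e a^2) * Real.sqrt (∑ a, u a^2)) := by
  set eb := ∑ a, p a * e a with heb
  set ub := ∑ a, p a * u a with hub
  have h1 : ∑ a, p a * e a * u a - eb * ub
      = ∑ a, (Real.sqrt (p a)*(e a - eb)) * (Real.sqrt (p a)*(u a - ub)) := by
    have h2 : ∀ a, (Real.sqrt (p a)*(e a - eb)) * (Real.sqrt (p a)*(u a - ub))
        = p a * e a * u a - (p a * u a) * eb - (p a * e a) * ub + p a * (eb*ub) := by
      intro a
      have hs : Real.sqrt (p a) * Real.sqrt (p a) = p a := Real.mul_self_sqrt (hp a)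
      have hr : (Real.sqrt (p a)*(e a - eb)) * (Real.sqrt (p a)*(u a - ub))
          = (Real.sqrt (p a) * Real.sqrt (p a)) * ((e a - eb)*(u a - ub)) := by ring
      rw [hr, hs]; ring
    rw [Finset.sum_congr rfl (fun a _ => h2 a)]
    simp only [Finset.sum_add_distrib, Finset.sum_sub_distrib, ← Finset.sum_mul, hp1]
    ring
  rw [h1]
  have cs := Finset.sum_mul_sq_le_sq_mul_sq Finset.univ
    (fun a => Real.sqrt (p a)*(e a - eb)) (fun a => Real.sqrt (p a)*(u a - ub))
  have he2 : ∑ a, (Real.sqrt (p a)*(e a - eb))^2 = ∑ a, p a * (e a - eb)^2 := by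
    apply Finset.sum_congr rfl; intro a _
    rw [mul_pow, Real.sq_sqrt (hp a)]
  have hu2 : ∑ a, (Real.sqrt (p a)*(u a - ub))^2 = ∑ a, p a * (u a - ub)^2 := by
    apply Finset.sum_congr rfl; intro a _
    rw [mul_pow, Real.sq_sqrt (hp a)]
  simp only [he2, hu2] at cs
  have hve := var_le p e hp hp1
  have hvu := var_le p u hp hp1
  have hnn1 : (0:ℝ) ≤ ∑ a, p a * (e a - eb)^2 := Finset.sum_nonneg fun a _ => mul_nonneg (hp a) (sq_nonneg _)
  have hnn2 : (0:ℝ) ≤ ∑ a, p a * (u a - ub)^2 := Finset.sum_nonneg fun a _ => mul_nonneg (hp a) (sq_nonneg _)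
  have hne : (0:ℝ) ≤ ∑ a, e a ^ 2 := Finset.sum_nonneg fun a _ => sq_nonneg _
  have hnu : (0:ℝ) ≤ ∑ a, u a ^ 2 := Finset.sum_nonneg fun a _ => sq_nonneg _
  have hmain : (∑ a, (Real.sqrt (p a)*(e a - eb)) * (Real.sqrt (p a)*(u a - ub)))^2
      ≤ ((1/2) * (Real.sqrt (∑ a, e a^2) * Real.sqrt (∑ a, u a^2)))^2 := by
    calc (∑ a, (Real.sqrt (p a)*(e a - eb)) * (Real.sqrt (p a)*(u a - ub)))^2
        ≤ (∑ a, p a * (e a - eb)^2) * (∑ a, p a * (u a - ub)^2) := cs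
      _ ≤ ((1/2) * ∑ a, e a ^ 2) * ((1/2) * ∑ a, u a ^ 2) := by
          apply mul_le_mul hve hvu hnn2 (by linarith)
      _ = ((1/2) * (Real.sqrt (∑ a, e a^2) * Real.sqrt (∑ a, u a^2)))^2 := by
          rw [mul_pow, mul_pow, Real.sq_sqrt hne, Real.sq_sqrt hnu]; ring
  have hrhs : 0 ≤ (1/2) * (Real.sqrt (∑ a, e a^2) * Real.sqrt (∑ a, u a^2)) := by positivity
  nlinarith [hmain]

lemma softmax_diff_le {A : Type*} [Fintype A] [Nonempty A] (τ : ℝ) (hτ : 0 < τ)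
    (q1 q2 e : A → ℝ) :
    ∑ a, e a * (Real.exp (q1 a / τ) / (∑ b, Real.exp (q1 b / τ))
        - Real.exp (q2 a / τ) / (∑ b, Real.exp (q2 b / τ)))
    ≤ 1/(2*τ) * (Real.sqrt (∑ a, e a ^ 2) * Real.sqrt (∑ a, (q1 a - q2 a) ^ 2)) := by
  set δ : A → ℝ := fun a => q1 a - q2 a with hδ
  set u : A → ℝ := fun a => δ a / τ with hu
  set N : ℝ → A → ℝ := fun t a => Real.exp ((q2 a + t * δ a) / τ) with hN
  set D : ℝ → ℝ := fun t => ∑ a, N t a with hD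
  have hDpos : ∀ t, 0 < D t :=
    fun t => Finset.sum_pos (fun a _ => Real.exp_pos _) Finset.univ_nonempty
  have hDne : ∀ t, D t ≠ 0 := fun t => (hDpos t).ne'
  set f : ℝ → ℝ := fun t => ∑ a, e a * (N t a / D t) with hf
  have hNd : ∀ (t : ℝ) (a : A), HasDerivAt (fun s => N s a) (N t a * u a) t := by
    intro t a
    have h1 : HasDerivAt (fun s : ℝ => (q2 a + s * δ a) / τ) (δ a / τ) t := by
      have h2 := ((hasDerivAt_id t).mul_const (δ a)).const_add (q2 a)
      simpa using h2.div_const τ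
    simpa [hN, hu, mul_comm] using h1.exp
  have hDd : ∀ t, HasDerivAt D (∑ a, N t a * u a) t := fun t =>
    HasDerivAt.fun_sum (fun a _ => hNd t a)
  set g : ℝ → ℝ := fun t => ∑ a, (N t a / D t) * e a * u a
      - (∑ a, (N t a / D t) * e a) * (∑ a, (N t a / D t) * u a) with hg
  have hfd : ∀ t, HasDerivAt f (g t) t := by
    intro t
    have hterm : ∀ a : A, HasDerivAt (fun s => e a * (N s a / D s))
        (e a * ((N t a * u a * D t - N t a * (∑ b, N t b * u b)) / (D t)^2)) t := by
      intro a
      exact ((hNd t a).div (hDd t) (hDne t)).const_mul (e a)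
    have hsum := HasDerivAt.fun_sum (fun a (_ : a ∈ Finset.univ) => hterm a)
    have heq : ∑ a, e a * ((N t a * u a * D t - N t a * (∑ b, N t b * u b)) / (D t)^2) = g t := by
      have hsu : ∑ b, (N t b / D t) * u b = (∑ b, N t b * u b) / D t := by
        rw [Finset.sum_div]
        exact Finset.sum_congr rfl fun b _ => by rw [div_mul_eq_mul_div]
      have hperterm : ∀ a : A,
          e a * ((N t a * u a * D t - N t a * (∑ b, N t b * u b)) / (D t)^2)
          = (N t a / D t) * e a * u a
            - ((N t a / D t) * e a) * ((∑ b, N t b * u b) / D t) := by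
        intro a
        have h := hDne t
        field_simp
      calc ∑ a, e a * ((N t a * u a * D t - N t a * (∑ b, N t b * u b)) / (D t)^2)
          = ∑ a, ((N t a / D t) * e a * u a
            - ((N t a / D t) * e a) * ((∑ b, N t b * u b) / D t)) :=
            Finset.sum_congr rfl fun a _ => hperterm a
        _ = (∑ a, (N t a / D t) * e a * u a)
            - (∑ a, (N t a / D t) * e a) * ((∑ b, N t b * u b) / D t) := by
            rw [Finset.sum_sub_distrib, ← Finset.sum_mul]
        _ = g t := by simp only [hg, hsu]
    rw [heq] at hsum
    exact hsum
  -- bound on the derivative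
  set M : ℝ := (1/2) * (Real.sqrt (∑ a, e a ^ 2) * Real.sqrt (∑ a, u a ^ 2)) with hM
  have hgbound : ∀ t : ℝ, ‖g t‖ ≤ M := by
    intro t
    set p : A → ℝ := fun a => N t a / D t with hp
    have hp0 : ∀ a, 0 ≤ p a := fun a => div_nonneg (Real.exp_pos _).le (hDpos t).le
    have hp1 : ∑ a, p a = 1 := by
      rw [hp]
      simp only
      rw [← Finset.sum_div, div_self (hDne t)]
    have hup := cov_le p e u hp0 hp1
    have hdn := cov_le p (fun a => -e a) u hp0 hp1
    simp only [neg_sq, mul_neg, neg_mul, Finset.sum_neg_distrib, neg_sub_neg] at hdn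
    rw [Real.norm_eq_abs, abs_le]
    constructor
    · rw [hg]
      simp only [hp] at hup hdn
      nlinarith [hdn]
    · rw [hg]
      simp only [hp] at hup
      exact hup
  -- mean value inequality on [0,1]
  have hmvt := Convex.norm_image_sub_le_of_norm_hasDerivWithin_le
    (f' := g) (fun x (_ : x ∈ Set.Icc (0:ℝ) 1) => (hfd x).hasDerivWithinAt)
    (fun x _ => hgbound x) (convex_Icc 0 1)
    (Set.left_mem_Icc.2 zero_le_one) (Set.right_mem_Icc.2 zero_le_one)
  have hf10 : f 1 - f 0 ≤ M := by
    have h1 : ‖f 1 - f 0‖ ≤ M * ‖(1:ℝ) - 0‖ := hmvt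
    simp only [sub_zero, norm_one, mul_one, Real.norm_eq_abs] at h1
    exact (le_abs_self _).trans h1
  -- identify endpoints
  have hN1 : ∀ a, N 1 a = Real.exp (q1 a / τ) := by
    intro a; simp [hN, hδ]
  have hN0 : ∀ a, N 0 a = Real.exp (q2 a / τ) := by
    intro a; simp [hN]
  have hD1 : D 1 = ∑ b, Real.exp (q1 b / τ) := Finset.sum_congr rfl fun b _ => hN1 b
  have hD0 : D 0 = ∑ b, Real.exp (q2 b / τ) := Finset.sum_congr rfl fun b _ => hN0 b
  have hgoal : ∑ a, e a * (Real.exp (q1 a / τ) / (∑ b, Real.exp (q1 b / τ))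
        - Real.exp (q2 a / τ) / (∑ b, Real.exp (q2 b / τ))) = f 1 - f 0 := by
    rw [hf]
    simp only
    rw [← Finset.sum_sub_distrib]
    refine Finset.sum_congr rfl fun a _ => ?_
    rw [hN1 a, hN0 a, hD1, hD0, mul_sub]
  -- final: M = 1/(2τ) * (sqrt ∑ e² * sqrt ∑ δ²)
  have hMval : M = 1/(2*τ) * (Real.sqrt (∑ a, e a ^ 2) * Real.sqrt (∑ a, (q1 a - q2 a) ^ 2)) := by
    have hsum : ∑ a, u a ^ 2 = (∑ a, (q1 a - q2 a) ^ 2) / τ^2 := by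
      rw [Finset.sum_div]
      exact Finset.sum_congr rfl fun a _ => by rw [hu]; simp only [hδ]; rw [div_pow]
    rw [hM, hsum, Real.sqrt_div (Finset.sum_nonneg fun a _ => sq_nonneg _),
      Real.sqrt_sq hτ.le]
    field_simp
  rw [hgoal, ← hMval]
  exact hf10


variable {S A X : Type*} [Fintype S] [Fintype A]
  [NormedAddCommGroup X] [NormedSpace ℝ X]

/-- Softmax (entropy-regularized) Bellman optimality operator. -/
def softBellman (r : X → S → A → ℝ) (P : X → S → A → S → ℝ)
    (γ τ : ℝ) (x : X) (V : S → ℝ) (s : S) : ℝ :=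
  τ * Real.log (∑ a, Real.exp ((r x s a + γ * ∑ s', P x s a s' * V s') / τ))

theorem soft_optimal_policy_lipschitz_in_parameter
    [Nonempty S] [Nonempty A]
    (r : X → S → A → ℝ) (P : X → S → A → S → ℝ)
    (hP0 : ∀ x s a s', 0 ≤ P x s a s')
    (hP1 : ∀ x s a, ∑ s', P x s a s' = 1)
    (γ : ℝ) (hγ0 : 0 < γ) (hγ1 : γ < 1)
    (τ : ℝ) (hτ : 0 < τ)
    (V : X → S → ℝ)
    (hfix : ∀ x s, softBellman r P γ τ x (V x) s = V x s)
    (Q : X → S → A → ℝ)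
    (hQ : ∀ x s a, Q x s a = r x s a + γ * ∑ s', P x s a s' * V x s')
    (π : X → S → A → ℝ)
    (hπ : ∀ x s a,
      π x s a = Real.exp (Q x s a / τ) / ∑ a', Real.exp (Q x s a' / τ))
    (CQ : ℝ) (hCQ : 0 ≤ CQ)
    (hQLip : ∀ x₁ x₂ : X,
      Real.sqrt (∑ s, ∑ a, (Q x₁ s a - Q x₂ s a) ^ 2) ≤ CQ * ‖x₁ - x₂‖) :
    ∀ x₁ x₂ : X,
      Real.sqrt (∑ s, ∑ a, (π x₁ s a - π x₂ s a) ^ 2) ≤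
        (CQ / (2 * τ)) * ‖x₁ - x₂‖ := by
  intro x₁ x₂
  classical
  set d : S → A → ℝ := fun s a => π x₁ s a - π x₂ s a with hd
  have hstate : ∀ s, ∑ a, d s a * (π x₁ s a - π x₂ s a) ≤
      1/(2*τ) * (Real.sqrt (∑ a, d s a ^ 2) *
        Real.sqrt (∑ a, (Q x₁ s a - Q x₂ s a) ^ 2)) := by
    intro s
    have h := softmax_diff_le τ hτ (Q x₁ s) (Q x₂ s) (d s)
    simp only [hπ]
    exact h
  set T : ℝ := ∑ s, ∑ a, d s a ^ 2 with hT
  set U : ℝ := ∑ s, ∑ a, (Q x₁ s a - Q x₂ s a) ^ 2 with hU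
  have hT0 : 0 ≤ T := Finset.sum_nonneg fun s _ =>
    Finset.sum_nonneg fun a _ => sq_nonneg _
  have hU0 : 0 ≤ U := Finset.sum_nonneg fun s _ =>
    Finset.sum_nonneg fun a _ => sq_nonneg _
  have hXnn : ∀ s : S, (0:ℝ) ≤ ∑ a, d s a ^ 2 :=
    fun s => Finset.sum_nonneg fun a _ => sq_nonneg _
  have hYnn : ∀ s : S, (0:ℝ) ≤ ∑ a, (Q x₁ s a - Q x₂ s a) ^ 2 :=
    fun s => Finset.sum_nonneg fun a _ => sq_nonneg _
  -- Cauchy-Schwarz over states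
  have hcs : ∑ s, (Real.sqrt (∑ a, d s a ^ 2) *
        Real.sqrt (∑ a, (Q x₁ s a - Q x₂ s a) ^ 2))
      ≤ Real.sqrt T * Real.sqrt U := by
    have cs := Finset.sum_mul_sq_le_sq_mul_sq Finset.univ
      (fun s => Real.sqrt (∑ a, d s a ^ 2))
      (fun s => Real.sqrt (∑ a, (Q x₁ s a - Q x₂ s a) ^ 2))
    simp only [Real.sq_sqrt (hXnn _), Real.sq_sqrt (hYnn _)] at cs
    have hnn : (0:ℝ) ≤ ∑ s, (Real.sqrt (∑ a, d s a ^ 2) *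
        Real.sqrt (∑ a, (Q x₁ s a - Q x₂ s a) ^ 2)) :=
      Finset.sum_nonneg fun s _ => mul_nonneg (Real.sqrt_nonneg _) (Real.sqrt_nonneg _)
    have h2 : (∑ s, (Real.sqrt (∑ a, d s a ^ 2) *
        Real.sqrt (∑ a, (Q x₁ s a - Q x₂ s a) ^ 2))) ^ 2
        ≤ (Real.sqrt T * Real.sqrt U) ^ 2 := by
      rw [mul_pow, Real.sq_sqrt hT0, Real.sq_sqrt hU0]
      exact cs
    have hrnn : 0 ≤ Real.sqrt T * Real.sqrt U :=
      mul_nonneg (Real.sqrt_nonneg _) (Real.sqrt_nonneg _)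
    nlinarith [h2]
  have hTle : T ≤ 1/(2*τ) * (Real.sqrt T * Real.sqrt U) := by
    calc T = ∑ s, ∑ a, d s a * (π x₁ s a - π x₂ s a) := by
          rw [hT]
          refine Finset.sum_congr rfl fun s _ => Finset.sum_congr rfl fun a _ => ?_
          rw [pow_two]
      _ ≤ ∑ s, 1/(2*τ) * (Real.sqrt (∑ a, d s a ^ 2) *
            Real.sqrt (∑ a, (Q x₁ s a - Q x₂ s a) ^ 2)) :=
          Finset.sum_le_sum fun s _ => hstate s
      _ = 1/(2*τ) * ∑ s, (Real.sqrt (∑ a, d s a ^ 2) *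
            Real.sqrt (∑ a, (Q x₁ s a - Q x₂ s a) ^ 2)) := by
          rw [Finset.mul_sum]
      _ ≤ 1/(2*τ) * (Real.sqrt T * Real.sqrt U) := by
          apply mul_le_mul_of_nonneg_left hcs
          positivity
  have hrhs0 : 0 ≤ CQ / (2*τ) * ‖x₁ - x₂‖ :=
    mul_nonneg (div_nonneg hCQ (by positivity)) (norm_nonneg _)
  rcases eq_or_lt_of_le (Real.sqrt_nonneg T) with h0 | h0
  · rw [← h0]; exact hrhs0
  · have hstep : Real.sqrt T ≤ 1/(2*τ) * Real.sqrt U := by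
      have hTT : Real.sqrt T * Real.sqrt T = T := Real.mul_self_sqrt hT0
      have h3 : Real.sqrt T * Real.sqrt T ≤ Real.sqrt T * (1/(2*τ) * Real.sqrt U) := by
        rw [hTT]
        calc T ≤ 1/(2*τ) * (Real.sqrt T * Real.sqrt U) := hTle
          _ = Real.sqrt T * (1/(2*τ) * Real.sqrt U) := by ring
      exact le_of_mul_le_mul_left h3 h0
    calc Real.sqrt T ≤ 1/(2*τ) * Real.sqrt U := hstep
      _ ≤ 1/(2*τ) * (CQ * ‖x₁ - x₂‖) := by
          apply mul_le_mul_of_nonneg_left (hQLip x₁ x₂)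
          positivity
      _ = CQ / (2*τ) * ‖x₁ - x₂‖ := by ring
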